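/- Let f(z) = Σ_{n=0}^∞ a_n z^n with a_n = Σ_{j=0}^n C(n,j)^2 C(2j,j). Then for every complex z with |z| < 1/9, the series converges and f satisfies the Picard–Fuchs differential equation z(z−1)(9z−1)·f''(z) + (27z^2 − 20z + 1)·f'(z) + 3(3z − 1)·f(z) = 0. -/

import Mathlib

/-- a_n = Σ_{j=0}^n C(n,j)² · C(2j,j). -/
def aseq (n : ℕ) : ℕ := ∑ j ∈ Finset.range (n + 1), n.choose j ^ 2 * (2 * j).choose j

/-- f(z) = Σ a_n zⁿ. -/
noncomputable def fPF (z : ℂ) : ℂ := ∑' n : ℕ, (aseq n : ℂ) * z ^ n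

/-! ### Auxiliary combinatorial lemmas -/

lemma aseq_le_pow (n : ℕ) : aseq n ≤ 9 ^ n := by
  have h1 : ∀ j : ℕ, n.choose j ^ 2 ≤ (2 * n).choose (2 * j) := by
    intro j
    have h := Nat.add_choose_eq n n (2 * j)
    have hmem : ((j, j) : ℕ × ℕ) ∈ Finset.HasAntidiagonal.antidiagonal (2 * j) := by
      simp [two_mul]
    calc n.choose j ^ 2 = n.choose j * n.choose j := sq (n.choose j)
      _ ≤ ∑ ij ∈ Finset.HasAntidiagonal.antidiagonal (2 * j), n.choose ij.1 * n.choose ij.2 :=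
          Finset.single_le_sum (f := fun ij => n.choose ij.1 * n.choose ij.2)
            (fun i _ => Nat.zero_le _) hmem
      _ = (2 * n).choose (2 * j) := by
          rw [show 2 * n = n + n from two_mul n]; exact h.symm
  have h2 : ∀ j : ℕ, (2 * j).choose j ≤ 2 ^ (2 * j) := by
    intro j
    calc (2 * j).choose j ≤ ∑ k ∈ Finset.range (2 * j + 1), (2 * j).choose k :=
          Finset.single_le_sum (fun i _ => Nat.zero_le _)
            (Finset.mem_range.2 (by omega))
      _ = 2 ^ (2 * j) := Nat.sum_range_choose (2 * j)
  calc aseq n ≤ ∑ j ∈ Finset.range (n + 1), (2 * n).choose (2 * j) * 2 ^ (2 * j) := by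
        apply Finset.sum_le_sum
        intro j _
        exact Nat.mul_le_mul (h1 j) (h2 j)
    _ = ∑ k ∈ Finset.image (fun j => 2 * j) (Finset.range (n + 1)),
          (2 * n).choose k * 2 ^ k := by
        rw [Finset.sum_image (by intro x _ y _ h; have h' : 2 * x = 2 * y := h; omega)]
    _ ≤ ∑ k ∈ Finset.range (2 * n + 1), (2 * n).choose k * 2 ^ k := by
        apply Finset.sum_le_sum_of_subset
        intro k hk
        simp only [Finset.mem_image, Finset.mem_range] at hk ⊢
        omega
    _ = 9 ^ n := by
        have h := add_pow (2 : ℕ) 1 (2 * n)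
        simp only [one_pow, mul_one, Nat.cast_id] at h
        calc ∑ k ∈ Finset.range (2 * n + 1), (2 * n).choose k * 2 ^ k
            = ∑ k ∈ Finset.range (2 * n + 1), 2 ^ k * (2 * n).choose k :=
              Finset.sum_congr rfl (fun k _ => Nat.mul_comm _ _)
          _ = (2 + 1) ^ (2 * n) := h.symm
          _ = 9 ^ n := by norm_num [pow_mul]

/-- universal absorption identity -/
lemma choose_absorb (m k : ℕ) : (m + 1).choose k * (m + 1 - k) = (m + 1) * m.choose k := by
  rw [Nat.add_one_mul_choose_eq, Nat.choose_succ_right_eq]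

noncomputable def Fc (n j : ℕ) : ℂ := ((n.choose j : ℂ)) ^ 2 * (((2 * j).choose j : ℂ))

noncomputable def Hc (n j : ℕ) : ℂ :=
  (j : ℂ) ^ 3 * (3 * (j : ℂ) - 4 * (n : ℂ) - 4) * (((n + 1).choose j : ℂ)) ^ 2
    * (((2 * j).choose j : ℂ))

/-- The WZ-certificate identity. -/
lemma cert (m j : ℕ) :
    ((m : ℂ) + 2) ^ 4 * Fc (m + 2) j
      - ((m : ℂ) + 2) ^ 2 * (10 * ((m : ℂ) + 1) ^ 2 + 10 * ((m : ℂ) + 1) + 3) * Fc (m + 1) j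
      + 9 * ((m : ℂ) + 1) ^ 2 * ((m : ℂ) + 2) ^ 2 * Fc m j
      = Hc (m + 1) (j + 1) - Hc (m + 1) j := by
  have hcb : ∀ k : ℕ, ((k : ℂ) + 1) * (((2 * (k + 1)).choose (k + 1) : ℂ))
      = 2 * (2 * (k : ℂ) + 1) * (((2 * k).choose k : ℂ)) := by
    intro k
    have h := Nat.succ_mul_centralBinom_succ k
    simp only [Nat.centralBinom] at h
    exact_mod_cast h
  rcases lt_trichotomy j (m + 1) with hj | hj | hj
  · -- generic case j ≤ m
    have hjm : j ≤ m := by omega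
    have hne1 : ((m : ℂ) + 2 - (j : ℂ)) ≠ 0 := by
      have : ((m : ℂ) + 2 - (j : ℂ)) = ((m + 2 - j : ℕ) : ℂ) := by
        push_cast [Nat.cast_sub (by omega : j ≤ m + 2)]; ring
      rw [this]
      exact Nat.cast_ne_zero.2 (by omega)
    have hne2 : ((m : ℂ) + 1) ≠ 0 := by
      have : ((m : ℂ) + 1) = ((m + 1 : ℕ) : ℂ) := by push_cast; ring
      rw [this]; exact_mod_cast (by omega : m + 1 ≠ 0)
    have hne3 : ((j : ℂ) + 1) ≠ 0 := by
      have : ((j : ℂ) + 1) = ((j + 1 : ℕ) : ℂ) := by push_cast; ring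
      rw [this]; exact_mod_cast (by omega : j + 1 ≠ 0)
    -- e1 : (m+2).choose j expansion
    have e1 : (((m + 2).choose j : ℂ)) * ((m : ℂ) + 2 - (j : ℂ))
        = ((m : ℂ) + 2) * (((m + 1).choose j : ℂ)) := by
      have h := choose_absorb (m + 1) j
      have h' := congrArg (Nat.cast : ℕ → ℂ) h
      push_cast [Nat.cast_sub (by omega : j ≤ m + 2)] at h'
      linear_combination h'
    have e2 : (((m).choose j : ℂ)) * ((m : ℂ) + 1)
        = (((m + 1).choose j : ℂ)) * ((m : ℂ) + 1 - (j : ℂ)) := by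
      have h := choose_absorb m j
      have h' := congrArg (Nat.cast : ℕ → ℂ) h
      push_cast [Nat.cast_sub (by omega : j ≤ m + 1)] at h'
      linear_combination -h'
    have e4 : (((m + 2).choose (j + 1) : ℂ)) * ((j : ℂ) + 1)
        = ((m : ℂ) + 2) * (((m + 1).choose j : ℂ)) := by
      have h := Nat.add_one_mul_choose_eq (m + 1) j
      have h' := congrArg (Nat.cast : ℕ → ℂ) h
      push_cast at h'
      linear_combination -h'
    have e5 := hcb j
    have d1 : (((m + 2).choose j : ℂ))
        = ((m : ℂ) + 2) * (((m + 1).choose j : ℂ)) / ((m : ℂ) + 2 - (j : ℂ)) := by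
      rw [eq_div_iff hne1]; exact e1
    have d2 : (((m).choose j : ℂ))
        = (((m + 1).choose j : ℂ)) * ((m : ℂ) + 1 - (j : ℂ)) / ((m : ℂ) + 1) := by
      rw [eq_div_iff hne2]; exact e2
    have d4 : (((m + 2).choose (j + 1) : ℂ))
        = ((m : ℂ) + 2) * (((m + 1).choose j : ℂ)) / ((j : ℂ) + 1) := by
      rw [eq_div_iff hne3]; exact e4
    have d5 : (((2 * (j + 1)).choose (j + 1) : ℂ))
        = 2 * (2 * (j : ℂ) + 1) * (((2 * j).choose j : ℂ)) / ((j : ℂ) + 1) := by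
      rw [eq_div_iff hne3]; linear_combination e5
    show _ = _
    unfold Fc Hc
    have hmm : m + 2 = (m + 1) + 1 := rfl
    rw [hmm] at *
    rw [d1, d2, d4, d5]
    push_cast
    field_simp
    ring
  · -- j = m + 1
    subst hj
    unfold Fc Hc
    have c1 : (m + 2).choose (m + 1) = m + 2 := Nat.choose_succ_self_right (m + 1)
    have c2 : (m + 1).choose (m + 1) = 1 := Nat.choose_self (m + 1)
    have c3 : (m).choose (m + 1) = 0 := Nat.choose_succ_self m
    have c4 : (m + 2).choose (m + 2) = 1 := Nat.choose_self (m + 2)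
    have e5 := hcb (m + 1)
    have hmm : m + 1 + 1 = m + 2 := rfl
    rw [hmm] at *
    rw [c1, c2, c3, c4]
    have hne : ((m : ℂ) + 1 + 1) ≠ 0 := by
      have : ((m : ℂ) + 1 + 1) = ((m + 2 : ℕ) : ℂ) := by push_cast; ring
      rw [this]; exact_mod_cast (by omega : m + 2 ≠ 0)
    have d5 : (((2 * (m + 2)).choose (m + 2) : ℂ))
        = 2 * (2 * ((m : ℂ) + 1) + 1) * (((2 * (m + 1)).choose (m + 1) : ℂ))
          / ((m : ℂ) + 1 + 1) := by
      rw [eq_div_iff hne]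
      have : (2 * ((m:ℂ) + 1) + 1) = (2 * ((m+1 : ℕ) : ℂ) + 1) := by push_cast; ring
      rw [this]
      have h2 : ((m:ℂ) + 1 + 1) = (((m + 1 : ℕ) : ℂ) + 1) := by push_cast; ring
      rw [h2]
      linear_combination e5
    rw [d5]
    push_cast
    field_simp
    ring
  · -- j ≥ m + 2
    have c1 : (m + 2).choose j = 0 ∨ j = m + 2 := by
      rcases Nat.lt_or_ge (m + 2) j with h | h
      · exact Or.inl (Nat.choose_eq_zero_of_lt h)
      · right; omega
    rcases c1 with c1 | c1
    · -- j ≥ m + 3 : everything vanishes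
      have hj3 : m + 2 < j := by
        rcases Nat.lt_or_ge (m + 2) j with h | h
        · exact h
        · exfalso
          have : j = m + 2 := by omega
          rw [this] at c1
          simp [Nat.choose_self] at c1
      unfold Fc Hc
      rw [c1]
      rw [Nat.choose_eq_zero_of_lt (by omega : m + 1 < j),
        Nat.choose_eq_zero_of_lt (by omega : m < j),
        Nat.choose_eq_zero_of_lt (by omega : m + 1 + 1 < j + 1)]
      push_cast
      ring
    · -- j = m + 2
      subst c1
      unfold Fc Hc
      rw [Nat.choose_eq_zero_of_lt (by omega : m + 1 < m + 2),
        Nat.choose_eq_zero_of_lt (by omega : m < m + 2),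
        Nat.choose_eq_zero_of_lt (by omega : m + 1 + 1 < m + 2 + 1)]
      have h1 : (m + 1 + 1).choose (m + 2) = 1 := Nat.choose_self (m + 2)
      rw [h1]
      push_cast
      ring

/-- Cast of aseq as a sum of `Fc`. -/
lemma aseq_eq_sum (n : ℕ) : (aseq n : ℂ) = ∑ j ∈ Finset.range (n + 1), Fc n j := by
  unfold aseq Fc
  push_cast
  rfl

/-- The Apéry-style recurrence, in ℂ. -/
lemma recC (m : ℕ) :
    ((m : ℂ) + 2) ^ 2 * (aseq (m + 2) : ℂ) + 9 * ((m : ℂ) + 1) ^ 2 * (aseq m : ℂ)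
      = (10 * ((m : ℂ) + 1) ^ 2 + 10 * ((m : ℂ) + 1) + 3) * (aseq (m + 1) : ℂ) := by
  have hsum : ∑ j ∈ Finset.range (m + 3),
      (((m : ℂ) + 2) ^ 4 * Fc (m + 2) j
        - ((m : ℂ) + 2) ^ 2 * (10 * ((m : ℂ) + 1) ^ 2 + 10 * ((m : ℂ) + 1) + 3) * Fc (m + 1) j
        + 9 * ((m : ℂ) + 1) ^ 2 * ((m : ℂ) + 2) ^ 2 * Fc m j)
      = 0 := by
    have h1 : ∀ j ∈ Finset.range (m + 3), (((m : ℂ) + 2) ^ 4 * Fc (m + 2) j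
        - ((m : ℂ) + 2) ^ 2 * (10 * ((m : ℂ) + 1) ^ 2 + 10 * ((m : ℂ) + 1) + 3) * Fc (m + 1) j
        + 9 * ((m : ℂ) + 1) ^ 2 * ((m : ℂ) + 2) ^ 2 * Fc m j)
        = Hc (m + 1) (j + 1) - Hc (m + 1) j := fun j _ => cert m j
    rw [Finset.sum_congr rfl h1, Finset.sum_range_sub (fun j => Hc (m + 1) j)]
    have hz1 : Hc (m + 1) (m + 3) = 0 := by
      unfold Hc
      rw [Nat.choose_eq_zero_of_lt (by omega : m + 1 + 1 < m + 3)]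
      ring
    have hz0 : Hc (m + 1) 0 = 0 := by
      unfold Hc
      push_cast
      ring
    rw [hz1, hz0]
    ring
  rw [Finset.sum_add_distrib, Finset.sum_sub_distrib, ← Finset.mul_sum, ← Finset.mul_sum,
    ← Finset.mul_sum] at hsum
  have hS2 : ∑ j ∈ Finset.range (m + 3), Fc (m + 2) j = (aseq (m + 2) : ℂ) :=
    (aseq_eq_sum (m + 2)).symm
  have hS1 : ∑ j ∈ Finset.range (m + 3), Fc (m + 1) j = (aseq (m + 1) : ℂ) := by
    rw [Finset.sum_range_succ, aseq_eq_sum (m + 1)]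
    have : Fc (m + 1) (m + 2) = 0 := by
      unfold Fc
      rw [Nat.choose_eq_zero_of_lt (by omega : m + 1 < m + 2)]
      push_cast
      ring
    rw [this, add_zero]
  have hS0 : ∑ j ∈ Finset.range (m + 3), Fc m j = (aseq m : ℂ) := by
    rw [Finset.sum_range_succ, Finset.sum_range_succ, aseq_eq_sum m]
    have hz1 : Fc m (m + 1) = 0 := by
      unfold Fc
      rw [Nat.choose_eq_zero_of_lt (by omega : m < m + 1)]; push_cast; ring
    have hz2 : Fc m (m + 2) = 0 := by
      unfold Fc
      rw [Nat.choose_eq_zero_of_lt (by omega : m < m + 2)]; push_cast; ring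
    rw [hz1, hz2, add_zero, add_zero]
  rw [hS2, hS1, hS0] at hsum
  have hne : ((m : ℂ) + 2) ≠ 0 := by
    have : ((m : ℂ) + 2) = ((m + 2 : ℕ) : ℂ) := by push_cast; ring
    rw [this]; exact_mod_cast (by omega : m + 2 ≠ 0)
  apply mul_left_cancel₀ (pow_ne_zero 2 hne)
  linear_combination hsum

/-! ### Analytic auxiliary definitions -/

noncomputable def G1fun (w : ℂ) : ℂ := ∑' n : ℕ, ((n + 1 : ℕ) : ℂ) * (aseq (n + 1) : ℂ) * w ^ n

noncomputable def Dfun (z : ℂ) : ℕ → ℂ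
  | 0 => 0
  | (n + 1) => ((9 * (n + 1) ^ 2 : ℕ) : ℂ) * (aseq n : ℂ) * z ^ (n + 1)

lemma tsum_shift1 {h : ℕ → ℂ} (hs : Summable h) (h0 : h 0 = 0) :
    (∑' n : ℕ, h (n + 1)) = ∑' n : ℕ, h n := by
  rw [Summable.tsum_eq_zero_add hs, h0, zero_add]

lemma tsum_shift2 {h : ℕ → ℂ} (hs : Summable h) (h0 : h 0 = 0) (h1 : h 1 = 0) :
    (∑' n : ℕ, h (n + 2)) = ∑' n : ℕ, h n := by
  have hs1 : Summable (fun n => h (n + 1)) := (summable_nat_add_iff 1).2 hs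
  calc (∑' n : ℕ, h (n + 2)) = ∑' n : ℕ, h (n + 1) := tsum_shift1 hs1 h1
    _ = ∑' n : ℕ, h n := tsum_shift1 hs h0

theorem picardFuchs (z : ℂ) (hz : ‖z‖ < 1 / 9) :
    Summable (fun n : ℕ => (aseq n : ℂ) * z ^ n) ∧
    z * (z - 1) * (9 * z - 1) * iteratedDeriv 2 fPF z
      + (27 * z ^ 2 - 20 * z + 1) * deriv fPF z
      + 3 * (3 * z - 1) * fPF z = 0 := by
  have habs : (0 : ℝ) ≤ ‖z‖ := norm_nonneg z
  set r : ℝ := (‖z‖ + 1 / 9) / 2 with hr_def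
  have hzr : ‖z‖ < r := by rw [hr_def]; linarith
  have hr9 : 9 * r < 1 := by rw [hr_def]; linarith
  have hr0 : 0 < r := by rw [hr_def]; linarith
  have hT1 : 9 * ‖z‖ < 1 := by linarith
  have hzball : z ∈ Metric.ball (0 : ℂ) r := by
    rw [mem_ball_zero_iff]; exact hzr
  -- geometric series facts
  have hgeoR : ∀ k : ℕ, Summable (fun n : ℕ => (n : ℝ) ^ k * (9 * r) ^ n) := by
    intro k
    apply summable_pow_mul_geometric_of_norm_lt_one k
    rw [Real.norm_eq_abs, abs_of_nonneg (by positivity)]; exact hr9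
  have hgeoT : ∀ k : ℕ, Summable (fun n : ℕ => (n : ℝ) ^ k * (9 * ‖z‖) ^ n) := by
    intro k
    apply summable_pow_mul_geometric_of_norm_lt_one k
    rw [Real.norm_eq_abs, abs_of_nonneg (by positivity)]; exact hT1
  -- master summability lemma
  have master : ∀ (cn : ℕ → ℕ) (i s : ℕ), (∀ n, cn n ≤ 23 * (n + 1) ^ 2) →
      Summable (fun n : ℕ => ((cn n : ℂ)) * (aseq (n + i) : ℂ) * z ^ (n + s)) := by
    intro cn i s hb
    refine Summable.of_norm_bounded
      (g := fun n : ℕ =>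
        (23 * 9 ^ i * (‖z‖) ^ s) * (((n : ℝ) + 1) ^ 2 * (9 * ‖z‖) ^ n))
      ?_ ?_
    · apply Summable.mul_left
      exact ((hgeoT 2).add (((hgeoT 1).mul_left 2).add (hgeoT 0))).congr (fun n => by ring)
    · intro n
      simp only [norm_mul, norm_pow, Complex.norm_natCast]
      have hb1 : (cn n : ℝ) ≤ 23 * ((n : ℝ) + 1) ^ 2 := by exact_mod_cast hb n
      have hb2 : (aseq (n + i) : ℝ) ≤ 9 ^ (n + i) := by exact_mod_cast aseq_le_pow (n + i)
      calc (cn n : ℝ) * (aseq (n + i) : ℝ) * ‖z‖ ^ (n + s)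
          ≤ (23 * ((n : ℝ) + 1) ^ 2) * (9 : ℝ) ^ (n + i) * ‖z‖ ^ (n + s) := by
            gcongr
        _ = (23 * 9 ^ i * (‖z‖) ^ s) * (((n : ℝ) + 1) ^ 2 * (9 * ‖z‖) ^ n) := by
            rw [pow_add, pow_add, mul_pow]; ring
  -- summability of the basic series
  have S0 : Summable (fun n : ℕ => (aseq n : ℂ) * z ^ n) :=
    (master (fun _ => 1) 0 0 (fun n => by exact Nat.one_le_iff_ne_zero.mpr (by positivity))).congr (fun n => by norm_num)
  have St1 : Summable (fun n : ℕ => ((n + 1 : ℕ) : ℂ) * (aseq (n + 1) : ℂ) * z ^ n) :=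
    (master (fun n => n + 1) 1 0 (fun n => by nlinarith)).congr (fun n => by norm_num)
  have St2 : Summable (fun n : ℕ =>
      ((n + 1 : ℕ) : ℂ) * ((n + 2 : ℕ) : ℂ) * (aseq (n + 2) : ℂ) * z ^ n) :=
    (master (fun n => (n + 1) * (n + 2)) 2 0 (fun n => by nlinarith)).congr
      (fun n => by push_cast; ring)
  -- derivative bound for f
  have hu1 : Summable (fun n : ℕ => 9 * ((n : ℝ) * (9 * r) ^ (n - 1))) := by
    apply Summable.mul_left
    have h : Summable (fun n : ℕ => ((n : ℝ) + 1) * (9 * r) ^ n) :=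
      ((hgeoR 1).add (hgeoR 0)).congr (fun n => by ring)
    exact (summable_nat_add_iff 1).1 (h.congr (fun n => by
      rw [Nat.add_sub_cancel]; push_cast; ring))
  have hbound1 : ∀ (n : ℕ), ∀ y ∈ Metric.ball (0 : ℂ) r,
      ‖(aseq n : ℂ) * ((n : ℂ) * y ^ (n - 1))‖ ≤ 9 * ((n : ℝ) * (9 * r) ^ (n - 1)) := by
    intro n y hy
    have hyr : ‖y‖ < r := mem_ball_zero_iff.1 hy
    rw [norm_mul, norm_mul, norm_pow, Complex.norm_natCast, Complex.norm_natCast]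
    cases n with
    | zero => simp
    | succ m =>
      rw [Nat.add_sub_cancel]
      have ha : (aseq (m + 1) : ℝ) ≤ 9 ^ (m + 1) := by exact_mod_cast aseq_le_pow (m + 1)
      calc (aseq (m + 1) : ℝ) * (((m + 1 : ℕ) : ℝ) * ‖y‖ ^ m)
          ≤ (9 : ℝ) ^ (m + 1) * (((m + 1 : ℕ) : ℝ) * r ^ m) := by
            gcongr <;> first | exact ha | exact hyr.le
        _ = 9 * (((m + 1 : ℕ) : ℝ) * (9 * r) ^ m) := by rw [mul_pow, pow_succ]; ring
  have hderiv1 : ∀ (n : ℕ), ∀ y ∈ Metric.ball (0 : ℂ) r,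
      HasDerivAt (fun w : ℂ => (aseq n : ℂ) * w ^ n) ((aseq n : ℂ) * ((n : ℂ) * y ^ (n - 1))) y :=
    fun n y _ => (hasDerivAt_pow n y).const_mul ((aseq n : ℂ))
  have hD1 : ∀ y ∈ Metric.ball (0 : ℂ) r,
      HasDerivAt fPF (∑' n : ℕ, (aseq n : ℂ) * ((n : ℂ) * y ^ (n - 1))) y := by
    intro y hy
    have hfPF : fPF = fun w : ℂ => ∑' n : ℕ, (aseq n : ℂ) * w ^ n := rfl
    rw [hfPF]
    exact hasDerivAt_tsum_of_isPreconnected hu1 Metric.isOpen_ball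
      (Convex.isPreconnected (convex_ball 0 r)) hderiv1 hbound1 hzball S0 hy
  -- sum of term derivatives equals G1fun
  have hval1 : ∀ y ∈ Metric.ball (0 : ℂ) r,
      (∑' n : ℕ, (aseq n : ℂ) * ((n : ℂ) * y ^ (n - 1))) = G1fun y := by
    intro y hy
    have hsummh : Summable (fun n : ℕ => (aseq n : ℂ) * ((n : ℂ) * y ^ (n - 1))) :=
      Summable.of_norm_bounded hu1 (fun n => hbound1 n y hy)
    rw [Summable.tsum_eq_zero_add hsummh]
    have h0 : (aseq 0 : ℂ) * ((0 : ℕ) : ℂ) * (y ^ (0 - 1)) = 0 := by simp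
    unfold G1fun
    simp only [Nat.cast_zero, zero_mul, mul_zero, zero_add]
    exact tsum_congr (fun n => by rw [Nat.add_sub_cancel]; push_cast; ring)
  have hD1' : ∀ y ∈ Metric.ball (0 : ℂ) r, HasDerivAt fPF (G1fun y) y :=
    fun y hy => (hval1 y hy) ▸ hD1 y hy
  -- second derivative
  have hu2 : Summable (fun n : ℕ => 81 * ((n : ℝ) * ((n : ℝ) + 1) * (9 * r) ^ (n - 1))) := by
    apply Summable.mul_left
    have h : Summable (fun n : ℕ => ((n : ℝ) ^ 2 + 3 * (n : ℝ) + 2) * (9 * r) ^ n) :=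
      ((hgeoR 2).add (((hgeoR 1).mul_left 3).add ((hgeoR 0).mul_left 2))).congr
        (fun n => by ring)
    exact (summable_nat_add_iff 1).1 (h.congr (fun n => by
      rw [Nat.add_sub_cancel]; push_cast; ring))
  have hbound2 : ∀ (n : ℕ), ∀ y ∈ Metric.ball (0 : ℂ) r,
      ‖((n + 1 : ℕ) : ℂ) * (aseq (n + 1) : ℂ) * ((n : ℂ) * y ^ (n - 1))‖
        ≤ 81 * ((n : ℝ) * ((n : ℝ) + 1) * (9 * r) ^ (n - 1)) := by
    intro n y hy
    have hyr : ‖y‖ < r := mem_ball_zero_iff.1 hy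
    rw [norm_mul, norm_mul, norm_mul, norm_pow, Complex.norm_natCast, Complex.norm_natCast,
      Complex.norm_natCast]
    cases n with
    | zero => simp
    | succ m =>
      rw [Nat.add_sub_cancel]
      have ha : (aseq (m + 2) : ℝ) ≤ 9 ^ (m + 2) := by exact_mod_cast aseq_le_pow (m + 2)
      calc ((m + 1 + 1 : ℕ) : ℝ) * (aseq (m + 1 + 1) : ℝ) * (((m + 1 : ℕ) : ℝ) * ‖y‖ ^ m)
          ≤ ((m + 1 + 1 : ℕ) : ℝ) * (9 : ℝ) ^ (m + 2) * (((m + 1 : ℕ) : ℝ) * r ^ m) := by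
            gcongr <;> first | exact ha | exact hyr.le
        _ = 81 * (((m + 1 : ℕ) : ℝ) * (((m + 1 : ℕ) : ℝ) + 1) * (9 * r) ^ m) := by
            rw [mul_pow]
            push_cast
            ring
  have hderiv2 : ∀ (n : ℕ), ∀ y ∈ Metric.ball (0 : ℂ) r,
      HasDerivAt (fun w : ℂ => ((n + 1 : ℕ) : ℂ) * (aseq (n + 1) : ℂ) * w ^ n)
        (((n + 1 : ℕ) : ℂ) * (aseq (n + 1) : ℂ) * ((n : ℂ) * y ^ (n - 1))) y :=
    fun n y _ => (hasDerivAt_pow n y).const_mul (((n + 1 : ℕ) : ℂ) * (aseq (n + 1) : ℂ))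
  have hD2 : HasDerivAt G1fun
      (∑' n : ℕ, ((n + 1 : ℕ) : ℂ) * (aseq (n + 1) : ℂ) * ((n : ℂ) * z ^ (n - 1))) z := by
    have hG1 : G1fun = fun w : ℂ => ∑' n : ℕ, ((n + 1 : ℕ) : ℂ) * (aseq (n + 1) : ℂ) * w ^ n :=
      rfl
    rw [hG1]
    exact hasDerivAt_tsum_of_isPreconnected hu2 Metric.isOpen_ball
      (Convex.isPreconnected (convex_ball 0 r)) hderiv2 hbound2 hzball St1 hzball
  have hval2 : (∑' n : ℕ, ((n + 1 : ℕ) : ℂ) * (aseq (n + 1) : ℂ) * ((n : ℂ) * z ^ (n - 1)))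
      = ∑' n : ℕ, ((n + 1 : ℕ) : ℂ) * ((n + 2 : ℕ) : ℂ) * (aseq (n + 2) : ℂ) * z ^ n := by
    have hsummh : Summable (fun n : ℕ =>
        ((n + 1 : ℕ) : ℂ) * (aseq (n + 1) : ℂ) * ((n : ℂ) * z ^ (n - 1))) :=
      Summable.of_norm_bounded hu2 (fun n => hbound2 n z hzball)
    rw [Summable.tsum_eq_zero_add hsummh]
    simp only [Nat.cast_zero, zero_mul, mul_zero, zero_add]
    exact tsum_congr (fun n => by rw [Nat.add_sub_cancel]; push_cast; ring)
  -- identify the derivatives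
  have hd1z : deriv fPF z = ∑' n : ℕ, ((n + 1 : ℕ) : ℂ) * (aseq (n + 1) : ℂ) * z ^ n :=
    (hD1' z hzball).deriv
  have hd2z : iteratedDeriv 2 fPF z
      = ∑' n : ℕ, ((n + 1 : ℕ) : ℂ) * ((n + 2 : ℕ) : ℂ) * (aseq (n + 2) : ℂ) * z ^ n := by
    rw [show (2 : ℕ) = 1 + 1 from rfl, iteratedDeriv_succ, iteratedDeriv_one]
    have hev : deriv fPF =ᶠ[nhds z] G1fun :=
      Filter.eventuallyEq_of_mem (Metric.isOpen_ball.mem_nhds hzball)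
        (fun y hy => (hD1' y hy).deriv)
    rw [Filter.EventuallyEq.deriv_eq hev, hD2.deriv, hval2]
  -- remaining summability facts
  have ShE1 : Summable (fun n : ℕ => ((n * (n + 1) : ℕ) : ℂ) * (aseq (n + 1) : ℂ) * z ^ n) :=
    (master (fun n => n * (n + 1)) 1 0 (fun n => by nlinarith)).congr (fun n => by norm_num)
  have Sh2 : Summable (fun n : ℕ => ((10 * n * (n - 1) : ℕ) : ℂ) * (aseq n : ℂ) * z ^ n) :=
    (master (fun n => 10 * n * (n - 1)) 0 0 (fun n => by
      nlinarith [Nat.sub_le n 1])).congr (fun n => by norm_num)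
  have Sk : Summable (fun n : ℕ => ((20 * n : ℕ) : ℂ) * (aseq n : ℂ) * z ^ n) :=
    (master (fun n => 20 * n) 0 0 (fun n => by nlinarith)).congr (fun n => by norm_num)
  have Sp : Summable (fun n : ℕ => ((9 * n * (n - 1) : ℕ) : ℂ) * (aseq n : ℂ) * z ^ (n + 1)) :=
    (master (fun n => 9 * n * (n - 1)) 0 1 (fun n => by
      nlinarith [Nat.sub_le n 1])).congr (fun n => by norm_num)
  have Sq : Summable (fun n : ℕ => ((27 * n : ℕ) : ℂ) * (aseq n : ℂ) * z ^ (n + 1)) :=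
    (master (fun n => 27 * n) 0 1 (fun n => by nlinarith)).congr (fun n => by norm_num)
  have SA : Summable (fun n : ℕ => (((n + 1) ^ 2 : ℕ) : ℂ) * (aseq (n + 1) : ℂ) * z ^ n) :=
    (master (fun n => (n + 1) ^ 2) 1 0 (fun n => by nlinarith)).congr (fun n => by norm_num)
  have SC : Summable (fun n : ℕ => ((9 * (n + 1) ^ 2 : ℕ) : ℂ) * (aseq n : ℂ) * z ^ (n + 1)) :=
    (master (fun n => 9 * (n + 1) ^ 2) 0 1 (fun n => by nlinarith)).congr (fun n => by norm_num)
  have SD : Summable (Dfun z) := (summable_nat_add_iff 1).1 (SC.congr (fun n => rfl))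
  -- the five tsum identities
  have E1 : z * (∑' n : ℕ, ((n + 1 : ℕ) : ℂ) * ((n + 2 : ℕ) : ℂ) * (aseq (n + 2) : ℂ) * z ^ n)
        + (∑' n : ℕ, ((n + 1 : ℕ) : ℂ) * (aseq (n + 1) : ℂ) * z ^ n)
      = ∑' n : ℕ, (((n + 1) ^ 2 : ℕ) : ℂ) * (aseq (n + 1) : ℂ) * z ^ n := by
    rw [← tsum_mul_left]
    have e : (∑' n : ℕ, z * (((n + 1 : ℕ) : ℂ) * ((n + 2 : ℕ) : ℂ) * (aseq (n + 2) : ℂ) * z ^ n))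
        = ∑' n : ℕ, ((n * (n + 1) : ℕ) : ℂ) * (aseq (n + 1) : ℂ) * z ^ n := by
      rw [← tsum_shift1 ShE1 (by norm_num)]
      exact tsum_congr (fun n => by push_cast; ring)
    rw [e, ← Summable.tsum_add ShE1 St1]
    exact tsum_congr (fun n => by push_cast; ring)
  have E2 : 10 * z ^ 2 * (∑' n : ℕ,
          ((n + 1 : ℕ) : ℂ) * ((n + 2 : ℕ) : ℂ) * (aseq (n + 2) : ℂ) * z ^ n)
        + 20 * z * (∑' n : ℕ, ((n + 1 : ℕ) : ℂ) * (aseq (n + 1) : ℂ) * z ^ n)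
        + 3 * (∑' n : ℕ, (aseq n : ℂ) * z ^ n)
      = ∑' n : ℕ, ((10 * n ^ 2 + 10 * n + 3 : ℕ) : ℂ) * (aseq n : ℂ) * z ^ n := by
    rw [← tsum_mul_left, ← tsum_mul_left, ← tsum_mul_left]
    have e2a : (∑' n : ℕ, 10 * z ^ 2 *
          (((n + 1 : ℕ) : ℂ) * ((n + 2 : ℕ) : ℂ) * (aseq (n + 2) : ℂ) * z ^ n))
        = ∑' n : ℕ, ((10 * n * (n - 1) : ℕ) : ℂ) * (aseq n : ℂ) * z ^ n := by
      rw [← tsum_shift2 Sh2 (by norm_num) (by norm_num)]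
      exact tsum_congr (fun n => by
        have h : n + 2 - 1 = n + 1 := by omega
        rw [h]; push_cast; ring)
    have e2b : (∑' n : ℕ, 20 * z * (((n + 1 : ℕ) : ℂ) * (aseq (n + 1) : ℂ) * z ^ n))
        = ∑' n : ℕ, ((20 * n : ℕ) : ℂ) * (aseq n : ℂ) * z ^ n := by
      rw [← tsum_shift1 Sk (by norm_num)]
      exact tsum_congr (fun n => by push_cast; ring)
    rw [e2a, e2b, ← Summable.tsum_add Sh2 Sk, ← Summable.tsum_add (Sh2.add Sk) (S0.mul_left 3)]
    refine tsum_congr (fun n => ?_)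
    cases n with
    | zero => norm_num
    | succ m =>
      have h : m + 1 - 1 = m := by omega
      rw [h]; push_cast; ring
  have E3 : 9 * z ^ 3 * (∑' n : ℕ,
          ((n + 1 : ℕ) : ℂ) * ((n + 2 : ℕ) : ℂ) * (aseq (n + 2) : ℂ) * z ^ n)
        + 27 * z ^ 2 * (∑' n : ℕ, ((n + 1 : ℕ) : ℂ) * (aseq (n + 1) : ℂ) * z ^ n)
        + 9 * z * (∑' n : ℕ, (aseq n : ℂ) * z ^ n)
      = ∑' n : ℕ, ((9 * (n + 1) ^ 2 : ℕ) : ℂ) * (aseq n : ℂ) * z ^ (n + 1) := by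
    rw [← tsum_mul_left, ← tsum_mul_left, ← tsum_mul_left]
    have e3a : (∑' n : ℕ, 9 * z ^ 3 *
          (((n + 1 : ℕ) : ℂ) * ((n + 2 : ℕ) : ℂ) * (aseq (n + 2) : ℂ) * z ^ n))
        = ∑' n : ℕ, ((9 * n * (n - 1) : ℕ) : ℂ) * (aseq n : ℂ) * z ^ (n + 1) := by
      rw [← tsum_shift2 Sp (by norm_num) (by norm_num)]
      exact tsum_congr (fun n => by
        have h : n + 2 - 1 = n + 1 := by omega
        rw [h]; push_cast; ring)
    have e3b : (∑' n : ℕ, 27 * z ^ 2 * (((n + 1 : ℕ) : ℂ) * (aseq (n + 1) : ℂ) * z ^ n))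
        = ∑' n : ℕ, ((27 * n : ℕ) : ℂ) * (aseq n : ℂ) * z ^ (n + 1) := by
      rw [← tsum_shift1 Sq (by norm_num)]
      exact tsum_congr (fun n => by push_cast; ring)
    rw [e3a, e3b, ← Summable.tsum_add Sp Sq, ← Summable.tsum_add (Sp.add Sq) (S0.mul_left (9 * z))]
    refine tsum_congr (fun n => ?_)
    cases n with
    | zero => norm_num [pow_succ]; ring
    | succ m =>
      have h : m + 1 - 1 = m := by omega
      rw [h]; push_cast; ring
  have E4 : (∑' n : ℕ, ((9 * (n + 1) ^ 2 : ℕ) : ℂ) * (aseq n : ℂ) * z ^ (n + 1))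
      = ∑' n : ℕ, Dfun z n := by
    rw [← tsum_shift1 SD (rfl : Dfun z 0 = 0)]
    exact tsum_congr (fun n => rfl)
  have E5 : (∑' n : ℕ, (((n + 1) ^ 2 : ℕ) : ℂ) * (aseq (n + 1) : ℂ) * z ^ n)
        + (∑' n : ℕ, Dfun z n)
      = ∑' n : ℕ, ((10 * n ^ 2 + 10 * n + 3 : ℕ) : ℂ) * (aseq n : ℂ) * z ^ n := by
    rw [← Summable.tsum_add SA SD]
    refine tsum_congr (fun n => ?_)
    cases n with
    | zero =>
      have ha0 : aseq 0 = 1 := by decide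
      have ha1 : aseq 1 = 3 := by decide
      simp [Dfun, ha0, ha1]
    | succ m =>
      show (((m + 1 + 1) ^ 2 : ℕ) : ℂ) * (aseq (m + 1 + 1) : ℂ) * z ^ (m + 1)
          + ((9 * (m + 1) ^ 2 : ℕ) : ℂ) * (aseq m : ℂ) * z ^ (m + 1)
        = ((10 * (m + 1) ^ 2 + 10 * (m + 1) + 3 : ℕ) : ℂ) * (aseq (m + 1) : ℂ) * z ^ (m + 1)
      push_cast
      linear_combination z ^ (m + 1) * recC m
  refine ⟨S0, ?_⟩
  rw [hd2z, hd1z]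
  have hfz : fPF z = ∑' n : ℕ, (aseq n : ℂ) * z ^ n := rfl
  rw [hfz]
  linear_combination E1 + E3 - E2 + E4 + E5
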